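/- Let b ∈ ℝ with 0 < |b| < 1, and let τ : ℝ² → ℝ be defined by τ(0,0) = 0 and, for (x, ξ) ≠ (0,0), τ(x, ξ) = −2√(x² + ξ²) · sin( (1/3) · arcsin( b x³ / (x² + ξ²)^{3/2} ) ). Then there exist no open neighborhood V of (0,0) in ℝ² and no function ρ : V → ℝ continuous at (0,0) such that τ(x, ξ) = x · ρ(x, ξ) for all (x, ξ) ∈ V. -/

import Mathlib

/-- The root of the cubic `τ³ − 3(x²+ξ²)τ − 2bx³` that vanishes identically on the line
`x = 0`, given by the explicit trigonometric formula of Section 4. -/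
noncomputable def tauRoot (b : ℝ) (p : ℝ × ℝ) : ℝ :=
  if p = (0, 0) then 0
  else
    -2 * Real.sqrt (p.1 ^ 2 + p.2 ^ 2) *
      Real.sin ((1 / 3) * Real.arcsin (b * p.1 ^ 3 / (p.1 ^ 2 + p.2 ^ 2) ^ ((3:ℝ) / 2)))

lemma rpow_three_half (r : ℝ) (hr : 0 ≤ r) : r ^ ((3:ℝ)/2) = Real.sqrt r ^ 3 := by
  rw [Real.sqrt_eq_rpow, ← Real.rpow_natCast (r ^ ((1:ℝ)/2)) 3, ← Real.rpow_mul hr]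
  norm_num

lemma tauRoot_on_axis (b x : ℝ) (hx : 0 < x) :
    tauRoot b (x, 0) = (-2 * Real.sin (Real.arcsin b / 3)) * x := by
  have hne : ((x, 0) : ℝ × ℝ) ≠ (0, 0) := by simp [hx.ne']
  have h0 : (0:ℝ) ≤ x ^ 2 + 0 ^ 2 := by positivity
  have hs : Real.sqrt (x ^ 2 + (0:ℝ) ^ 2) = x := by
    rw [show x ^ 2 + (0:ℝ) ^ 2 = x ^ 2 by ring, Real.sqrt_sq hx.le]
  have hr : ((x:ℝ) ^ 2 + 0 ^ 2) ^ ((3:ℝ)/2) = x ^ 3 := by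
    rw [rpow_three_half _ h0, hs]
  rw [tauRoot, if_neg hne]
  simp only [hs, hr]
  have hx3 : x ^ 3 ≠ 0 := by positivity
  rw [mul_div_assoc, div_self hx3, mul_one]
  ring_nf

lemma tauRoot_bound (b : ℝ) (hb : |b| ≤ 1) (p : ℝ × ℝ) (hp : p ≠ (0, 0)) :
    |tauRoot b p| ≤ |b| * |p.1| ^ 3 / (p.1 ^ 2 + p.2 ^ 2) := by
  set r : ℝ := p.1 ^ 2 + p.2 ^ 2 with hrdef
  have hr : 0 < r := by
    have hne : p.1 ≠ 0 ∨ p.2 ≠ 0 := by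
      by_contra h
      push_neg at h
      exact hp (Prod.ext h.1 h.2)
    rcases hne with h | h <;> positivity
  have hsr : 0 < Real.sqrt r := Real.sqrt_pos.mpr hr
  set z : ℝ := b * p.1 ^ 3 / r ^ ((3:ℝ)/2) with hzdef
  have hx_le : |p.1| ≤ Real.sqrt r := by
    rw [show Real.sqrt r = Real.sqrt r from rfl]
    have : p.1 ^ 2 ≤ r := by nlinarith [sq_nonneg p.2]
    calc |p.1| = Real.sqrt (p.1 ^ 2) := by rw [Real.sqrt_sq_eq_abs]
    _ ≤ Real.sqrt r := Real.sqrt_le_sqrt this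
  have habs_z : |z| = |b| * |p.1| ^ 3 / Real.sqrt r ^ 3 := by
    rw [hzdef, abs_div, abs_mul, abs_pow, rpow_three_half _ hr.le,
      abs_of_nonneg (by positivity : (0:ℝ) ≤ Real.sqrt r ^ 3)]
  have hz1 : |z| ≤ 1 := by
    rw [habs_z]
    rw [div_le_one (by positivity)]
    calc |b| * |p.1| ^ 3 ≤ 1 * Real.sqrt r ^ 3 := by
          apply mul_le_mul hb (pow_le_pow_left₀ (abs_nonneg _) hx_le 3) (by positivity) one_pos.le
    _ = Real.sqrt r ^ 3 := one_mul _
  set t : ℝ := (1/3) * Real.arcsin z with htdef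
  set s : ℝ := Real.sin t with hsdef
  -- |t| ≤ π/6
  have ht : |t| ≤ Real.pi / 6 := by
    rw [htdef, abs_mul]
    have : |Real.arcsin z| ≤ Real.pi / 2 := by
      rw [abs_le]
      exact ⟨Real.neg_pi_div_two_le_arcsin z, Real.arcsin_le_pi_div_two z⟩
    rw [abs_of_nonneg (by norm_num : (0:ℝ) ≤ 1/3)]
    linarith
  have hpi6 : Real.pi / 6 ≤ Real.pi / 2 := by linarith [Real.pi_pos]
  have hs_half : |s| ≤ 1 / 2 := by
    have h1 : s ≤ 1 / 2 := by
      have := Real.strictMonoOn_sin.monotoneOn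
        (a := t) (b := Real.pi / 6)
        ⟨by linarith [abs_le.mp ht, Real.pi_pos], by linarith [abs_le.mp ht]⟩
        ⟨by linarith [Real.pi_pos], hpi6⟩ (abs_le.mp ht).2
      rwa [Real.sin_pi_div_six] at this
    have h2 : -(1 / 2) ≤ s := by
      have := Real.strictMonoOn_sin.monotoneOn
        (a := -(Real.pi / 6)) (b := t)
        ⟨by linarith, by linarith [Real.pi_pos]⟩
        ⟨by linarith [abs_le.mp ht, Real.pi_pos], by linarith [abs_le.mp ht]⟩
        (abs_le.mp ht).1
      rwa [Real.sin_neg, Real.sin_pi_div_six] at this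
    rw [abs_le]; constructor <;> linarith
  -- z = 3 s − 4 s³
  have hzs : z = 3 * s - 4 * s ^ 3 := by
    have h3t : 3 * t = Real.arcsin z := by rw [htdef]; ring
    have := Real.sin_three_mul t
    rw [h3t, Real.sin_arcsin (by linarith [abs_le.mp hz1]) (by linarith [abs_le.mp hz1])] at this
    rw [this, hsdef]
  have hs_le : |s| ≤ |z| / 2 := by
    have : |z| = |s| * |3 - 4 * s ^ 2| := by
      rw [hzs, show 3 * s - 4 * s ^ 3 = s * (3 - 4 * s ^ 2) by ring, abs_mul]
    have h2 : (2:ℝ) ≤ |3 - 4 * s ^ 2| := by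
      have hsq : s ^ 2 ≤ 1 / 4 := by
        have := abs_le.mp hs_half; nlinarith [sq_abs s]
      rw [abs_of_nonneg (by nlinarith)]
      nlinarith
    nlinarith [abs_nonneg s, abs_nonneg z]
  -- conclude
  have : tauRoot b p = -2 * Real.sqrt r * s := by
    rw [tauRoot, if_neg hp]
  rw [this, abs_mul, abs_mul]
  have h2r : |(-2:ℝ)| * |Real.sqrt r| = 2 * Real.sqrt r := by
    rw [abs_of_nonneg (Real.sqrt_nonneg r)]; norm_num
  rw [h2r]
  calc 2 * Real.sqrt r * |s| ≤ 2 * Real.sqrt r * (|z| / 2) := by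
        apply mul_le_mul_of_nonneg_left hs_le (by positivity)
  _ = Real.sqrt r * |z| := by ring
  _ = Real.sqrt r * (|b| * |p.1| ^ 3 / Real.sqrt r ^ 3) := by rw [habs_z]
  _ = |b| * |p.1| ^ 3 / r := by
      have h3 : Real.sqrt r ^ 3 = r * Real.sqrt r := by
        rw [pow_succ, Real.sq_sqrt hr.le]
      rw [h3]
      field_simp

/-- The root `tauRoot` cannot be written as `x · ρ(x, ξ)` near the origin with `ρ`
continuous at `(0,0)`: the contradiction concluding Section 4 of the paper. -/
theorem no_continuous_factor (b : ℝ) (hb₀ : 0 < |b|) (hb₁ : |b| < 1) :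
    ¬ ∃ V : Set (ℝ × ℝ), IsOpen V ∧ ((0, 0) : ℝ × ℝ) ∈ V ∧
        ∃ ρ : ℝ × ℝ → ℝ, ContinuousWithinAt ρ V ((0, 0) : ℝ × ℝ) ∧
          ∀ p ∈ V, tauRoot b p = p.1 * ρ p := by
  rintro ⟨V, hVopen, hV0, ρ, hρcont, hρfac⟩
  set c : ℝ := -2 * Real.sin (Real.arcsin b / 3) with hcdef
  have hbne : b ≠ 0 := by intro h; rw [h] at hb₀; simp at hb₀
  have hc : c ≠ 0 := by
    have harcs : Real.arcsin b ≠ 0 := fun h => hbne (Real.arcsin_eq_zero_iff.mp h)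
    have hbound : |Real.arcsin b| ≤ Real.pi / 2 := by
      rw [abs_le]
      exact ⟨Real.neg_pi_div_two_le_arcsin b, Real.arcsin_le_pi_div_two b⟩
    have h1 := abs_le.mp hbound
    have hpi := Real.pi_pos
    have : Real.sin (Real.arcsin b / 3) ≠ 0 := by
      intro h
      rw [Real.sin_eq_zero_iff_of_lt_of_lt (by linarith) (by linarith)] at h
      exact harcs (by linarith)
    simp [hcdef, this]
  set ε : ℝ := |c| / 3 with hεdef
  have hε : 0 < ε := by positivity
  obtain ⟨δ, hδ, hδprop⟩ := Metric.continuousWithinAt_iff.mp hρcont ε hε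
  obtain ⟨η, hη, hball⟩ := Metric.isOpen_iff.mp hVopen _ hV0
  -- point on the axis
  set m : ℝ := min δ η with hmdef
  have hm : 0 < m := lt_min hδ hη
  set x : ℝ := m / 2 with hxdef
  have hx : 0 < x := by positivity
  have hxdist : dist ((x, (0:ℝ)) : ℝ × ℝ) ((0,0) : ℝ × ℝ) = x := by
    rw [Prod.dist_eq]
    simp only [Real.dist_eq, sub_zero, dist_self]
    rw [abs_of_pos hx]
    exact max_eq_left hx.le
  have hxV : ((x, (0:ℝ)) : ℝ × ℝ) ∈ V := by
    apply hball
    rw [Metric.mem_ball, hxdist]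
    calc x < m := by rw [hxdef]; linarith
    _ ≤ η := min_le_right _ _
  have hρx : ρ (x, 0) = c := by
    have h := hρfac _ hxV
    rw [tauRoot_on_axis b x hx] at h
    have h2 : x * ρ (x, 0) = x * c := by
      rw [hcdef]; linear_combination -h
    exact mul_left_cancel₀ hx.ne' h2
  have hρ0 : |ρ (0,0) - c| < ε := by
    have := hδprop hxV (by
      rw [hxdist]
      calc x < m := by rw [hxdef]; linarith
      _ ≤ δ := min_le_left _ _)
    rw [Real.dist_eq, hρx] at this
    rwa [abs_sub_comm]
  -- point on the parabola x = ξ²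
  set ξ : ℝ := min (min δ η) (min ε 1) / 2 with hξdef
  have hξpos : 0 < ξ := by
    apply div_pos (lt_min hm (lt_min hε one_pos)) two_pos
  have hξ1 : ξ ≤ 1 := by
    have : min (min δ η) (min ε 1) ≤ 1 := le_trans (min_le_right _ _) (min_le_right _ _)
    rw [hξdef]; linarith
  have hξε : ξ < ε := by
    have : min (min δ η) (min ε 1) ≤ ε := le_trans (min_le_right _ _) (min_le_left _ _)
    rw [hξdef]; linarith
  have hξδ : ξ < δ := by
    have : min (min δ η) (min ε 1) ≤ δ := le_trans (min_le_left _ _) (min_le_left _ _)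
    rw [hξdef]; linarith
  have hξη : ξ < η := by
    have : min (min δ η) (min ε 1) ≤ η := le_trans (min_le_left _ _) (min_le_right _ _)
    rw [hξdef]; linarith
  set q : ℝ × ℝ := (ξ ^ 2, ξ) with hqdef
  have hqne : q ≠ (0, 0) := by
    simp [hqdef, Prod.ext_iff, hξpos.ne']
  have hξsq : ξ ^ 2 ≤ ξ := by nlinarith
  have hqdist : dist q ((0,0) : ℝ × ℝ) = ξ := by
    rw [Prod.dist_eq]
    simp only [Real.dist_eq, sub_zero, dist_self]
    rw [abs_of_nonneg (sq_nonneg ξ), abs_of_pos hξpos]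
    exact max_eq_right hξsq
  have hqV : q ∈ V := by
    apply hball; rw [Metric.mem_ball, hqdist]; exact lt_of_lt_of_le hξη le_rfl
  -- bound on ρ q
  have hqbound : |ρ q| ≤ |b| * ξ ^ 2 := by
    have hb' := tauRoot_bound b hb₁.le q hqne
    rw [hρfac _ hqV, abs_mul] at hb'
    have hq1 : q.1 = ξ ^ 2 := rfl
    have hq2 : q.2 = ξ := rfl
    rw [hq1, hq2] at hb'
    have hden : (0:ℝ) < (ξ ^ 2) ^ 2 + ξ ^ 2 := by positivity
    have h1 : |ξ ^ 2| * |ρ q| ≤ |b| * |ξ ^ 2| ^ 3 / ((ξ ^ 2) ^ 2 + ξ ^ 2) := hb'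
    have habs : |ξ ^ 2| = ξ ^ 2 := abs_of_nonneg (sq_nonneg ξ)
    rw [habs] at h1
    have h2 : |b| * (ξ ^ 2) ^ 3 / ((ξ ^ 2) ^ 2 + ξ ^ 2) ≤ |b| * ξ ^ 2 * ξ ^ 2 := by
      rw [div_le_iff₀ hden]
      have : (0:ℝ) ≤ |b| := abs_nonneg b
      nlinarith [mul_nonneg this (pow_nonneg hξpos.le 8)]
    have h3 : ξ ^ 2 * |ρ q| ≤ |b| * ξ ^ 2 * ξ ^ 2 := le_trans h1 h2
    have hξ2 : (0:ℝ) < ξ ^ 2 := by positivity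
    calc |ρ q| = ξ ^ 2 * |ρ q| / ξ ^ 2 := by field_simp
    _ ≤ |b| * ξ ^ 2 * ξ ^ 2 / ξ ^ 2 := by gcongr
    _ = |b| * ξ ^ 2 := by field_simp
  have hρq_small : |ρ q| < ε := by
    calc |ρ q| ≤ |b| * ξ ^ 2 := hqbound
    _ ≤ 1 * ξ ^ 2 := by nlinarith [sq_nonneg ξ]
    _ = ξ ^ 2 := one_mul _
    _ ≤ ξ := hξsq
    _ < ε := hξε
  have hρq_close : |ρ q - ρ (0,0)| < ε := by
    have := hδprop hqV (by rw [hqdist]; exact hξδ)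
    rwa [Real.dist_eq] at this
  have : |c| < 3 * ε := by
    calc |c| = |c - ρ (0,0) + (ρ (0,0) - ρ q) + ρ q| := by ring_nf
    _ ≤ |c - ρ (0,0)| + |ρ (0,0) - ρ q| + |ρ q| := by
        apply le_trans (abs_add_le _ _)
        gcongr
        exact abs_add_le _ _
    _ < ε + ε + ε := by
        have e1 : |c - ρ (0,0)| = |ρ (0,0) - c| := abs_sub_comm _ _
        have e2 : |ρ (0,0) - ρ q| = |ρ q - ρ (0,0)| := abs_sub_comm _ _
        linarith
    _ = 3 * ε := by ring
  rw [hεdef] at this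
  have hcpos : 0 < |c| := abs_pos.mpr hc
  linarith
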